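/- (Summation formula (A.1)) Let 0 < q < 1, 0 < a < q^{-1} and b ∈ ℝ. Then the series below converges absolutely and Σ_{n=0}^{∞} [(abq;q)_n (bq;q)_n / ((aq;q)_n (q;q)_n)] · (1 − abq^{2n+1}) · a^n q^{n²} = (1 − abq) · (abq²;q)_∞ / (aq;q)_∞. -/

import Mathlib

open scoped BigOperators

/-- The q-shifted factorial `(a;q)_k`. -/
noncomputable def qPoch (q a : ℝ) (k : ℕ) : ℝ :=
  ∏ j ∈ Finset.range k, (1 - a * q ^ j)

/-- The infinite q-shifted factorial `(a;q)_∞`. -/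
noncomputable def qPochInf (q a : ℝ) : ℝ :=
  ∏' j : ℕ, (1 - a * q ^ j)

open Filter Topology

lemma qPoch_succ (q x : ℝ) (n : ℕ) :
    qPoch q x (n + 1) = qPoch q x n * (1 - x * q ^ n) :=
  Finset.prod_range_succ _ n

lemma qPoch_succ_left (q x : ℝ) (n : ℕ) :
    qPoch q x (n + 1) = (1 - x) * qPoch q (x * q) n := by
  simp only [qPoch]
  rw [Finset.prod_range_succ' (fun j => (1 - x * q ^ j)) n, pow_zero, mul_one, mul_comm]
  congr 1
  refine Finset.prod_congr rfl fun j _ => ?_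
  rw [pow_succ']
  ring

lemma qPoch_pos {q x : ℝ} (hq0 : 0 < q) (hq1 : q < 1) (hx0 : 0 ≤ x) (hx1 : x < 1) (n : ℕ) :
    0 < qPoch q x n := by
  refine Finset.prod_pos fun j _ => ?_
  have h1 : q ^ j ≤ 1 := pow_le_one₀ hq0.le hq1.le
  have : x * q ^ j ≤ x * 1 := by
    apply mul_le_mul_of_nonneg_left h1 hx0
  nlinarith

lemma qPoch_le_one {q x : ℝ} (hq0 : 0 < q) (hq1 : q < 1) (hx0 : 0 ≤ x) (hx1 : x < 1) (n : ℕ) :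
    qPoch q x n ≤ 1 := by
  refine Finset.prod_le_one (fun j _ => ?_) (fun j _ => ?_)
  · have h1 : q ^ j ≤ 1 := pow_le_one₀ hq0.le hq1.le
    have : x * q ^ j ≤ x * 1 := mul_le_mul_of_nonneg_left h1 hx0
    nlinarith
  · have : 0 ≤ x * q ^ j := mul_nonneg hx0 (pow_nonneg hq0.le j)
    linarith

lemma qPoch_anti {q x y : ℝ} (hq0 : 0 < q) (hq1 : q < 1) (hx0 : 0 ≤ x) (hxy : x ≤ y)
    (hy1 : y < 1) (n : ℕ) : qPoch q y n ≤ qPoch q x n := by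
  refine Finset.prod_le_prod (fun j _ => ?_) (fun j _ => ?_)
  · have h1 : q ^ j ≤ 1 := pow_le_one₀ hq0.le hq1.le
    have : y * q ^ j ≤ y * 1 := mul_le_mul_of_nonneg_left h1 (hx0.trans hxy)
    nlinarith
  · have : 0 ≤ (y - x) * q ^ j := mul_nonneg (by linarith) (pow_nonneg hq0.le j)
    nlinarith

lemma geom_partial_le {q : ℝ} (hq0 : 0 < q) (hq1 : q < 1) (n : ℕ) :
    ∑ j ∈ Finset.range n, q ^ j ≤ (1 - q)⁻¹ := by
  rw [← tsum_geometric_of_lt_one hq0.le hq1]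
  exact Summable.sum_le_tsum _ (fun j _ => pow_nonneg hq0.le j)
    (summable_geometric_of_lt_one hq0.le hq1)

/-- Upper bound: `|qPoch q x n| ≤ exp (|x| / (1-q))`. -/
lemma qPoch_abs_le {q : ℝ} (x : ℝ) (hq0 : 0 < q) (hq1 : q < 1) (n : ℕ) :
    |qPoch q x n| ≤ Real.exp (|x| / (1 - q)) := by
  rw [qPoch, Finset.abs_prod]
  have h1 : ∀ j ∈ Finset.range n, |1 - x * q ^ j| ≤ Real.exp (|x| * q ^ j) := by
    intro j _
    have h2 : |1 - x * q ^ j| ≤ 1 + |x| * q ^ j := by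
      calc |1 - x * q ^ j| ≤ |1| + |x * q ^ j| := abs_sub _ _
        _ = 1 + |x| * q ^ j := by
            rw [abs_one, abs_mul, abs_of_nonneg (pow_nonneg hq0.le j)]
    have h3 := Real.add_one_le_exp (|x| * q ^ j)
    linarith
  calc (∏ j ∈ Finset.range n, |1 - x * q ^ j|)
      ≤ ∏ j ∈ Finset.range n, Real.exp (|x| * q ^ j) :=
        Finset.prod_le_prod (fun j _ => abs_nonneg _) h1
    _ = Real.exp (∑ j ∈ Finset.range n, |x| * q ^ j) := (Real.exp_sum _ _).symm
    _ ≤ Real.exp (|x| / (1 - q)) := by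
        apply Real.exp_le_exp.mpr
        rw [← Finset.mul_sum, div_eq_mul_inv]
        exact mul_le_mul_of_nonneg_left (geom_partial_le hq0 hq1 n) (abs_nonneg x)

/-- helper: `exp (-(t/(1-c))) ≤ 1 - t` for `0 ≤ t ≤ c < 1`. -/
lemma exp_neg_le_one_sub {t c : ℝ} (h0 : 0 ≤ t) (h1 : t ≤ c) (hc : c < 1) :
    Real.exp (-(t / (1 - c))) ≤ 1 - t := by
  have h1c : 0 < 1 - c := by linarith
  have hE := Real.add_one_le_exp (t / (1 - c))
  have hkey : 1 ≤ (1 - t) * Real.exp (t / (1 - c)) := by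
    have h2 : (1 - t) * (t / (1 - c) + 1) ≥ 1 := by
      have h3 : (1 - t) * (t / (1 - c)) ≥ t := by
        rw [ge_iff_le, ← sub_nonneg]
        have : (1 - t) * (t / (1 - c)) - t = t * ((c - t) / (1 - c)) := by
          field_simp
          ring
        rw [this]
        exact mul_nonneg h0 (div_nonneg (by linarith) h1c.le)
      nlinarith
    nlinarith [Real.exp_pos (t / (1 - c))]
  rw [Real.exp_neg]
  have hEpos : 0 < Real.exp (t / (1 - c)) := Real.exp_pos _
  calc (Real.exp (t / (1 - c)))⁻¹ = (Real.exp (t / (1 - c)))⁻¹ * 1 := (mul_one _).symm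
    _ ≤ (Real.exp (t / (1 - c)))⁻¹ * ((1 - t) * Real.exp (t / (1 - c))) :=
        mul_le_mul_of_nonneg_left hkey (inv_nonneg.mpr hEpos.le)
    _ = 1 - t := by field_simp

/-- Lower bound: `exp (-(x/((1-x)(1-q)))) ≤ qPoch q x n` for `0 ≤ x < 1`. -/
lemma qPoch_ge {q x : ℝ} (hq0 : 0 < q) (hq1 : q < 1) (hx0 : 0 ≤ x) (hx1 : x < 1) (n : ℕ) :
    Real.exp (-(x / ((1 - x) * (1 - q)))) ≤ qPoch q x n := by
  have step : ∀ j ∈ Finset.range n, Real.exp (-(x * q ^ j / (1 - x))) ≤ 1 - x * q ^ j := by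
    intro j _
    refine exp_neg_le_one_sub (mul_nonneg hx0 (pow_nonneg hq0.le j)) ?_ hx1
    have h1 : q ^ j ≤ 1 := pow_le_one₀ hq0.le hq1.le
    nlinarith
  calc Real.exp (-(x / ((1 - x) * (1 - q))))
      ≤ Real.exp (∑ j ∈ Finset.range n, -(x * q ^ j / (1 - x))) := by
        apply Real.exp_le_exp.mpr
        have hsum : ∑ j ∈ Finset.range n, -(x * q ^ j / (1 - x))
            = -(x / (1 - x)) * ∑ j ∈ Finset.range n, q ^ j := by
          rw [Finset.mul_sum]
          refine Finset.sum_congr rfl fun j _ => ?_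
          ring
        rw [hsum]
        have hx' : 0 ≤ x / (1 - x) := div_nonneg hx0 (by linarith)
        have := mul_le_mul_of_nonneg_left (geom_partial_le hq0 hq1 n) hx'
        have hrw : -(x / ((1 - x) * (1 - q))) = -(x / (1 - x) * (1 - q)⁻¹) := by
          field_simp
        rw [hrw]
        nlinarith
    _ = ∏ j ∈ Finset.range n, Real.exp (-(x * q ^ j / (1 - x))) := Real.exp_sum _ _
    _ ≤ ∏ j ∈ Finset.range n, (1 - x * q ^ j) :=
        Finset.prod_le_prod (fun j _ => (Real.exp_pos _).le) step
    _ = qPoch q x n := rfl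

/-- `|log (1 - t)| ≤ 2|t|` for `|t| ≤ 1/2`. -/
lemma abs_log_one_sub_le {t : ℝ} (h : |t| ≤ 1 / 2) : |Real.log (1 - t)| ≤ 2 * |t| := by
  obtain ⟨hl, hr⟩ := abs_le.mp h
  have h1 : (0 : ℝ) < 1 - t := by linarith
  rcases le_or_gt 0 t with ht | ht
  · have hlog : Real.log (1 - t) ≤ 0 := Real.log_nonpos (by linarith) (by linarith)
    rw [abs_of_nonpos hlog, abs_of_nonneg ht]
    have h2 : -Real.log (1 - t) = Real.log (1 - t)⁻¹ := (Real.log_inv _).symm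
    rw [h2]
    have h3 := Real.log_le_sub_one_of_pos (inv_pos.mpr h1)
    have h4 : (1 - t)⁻¹ - 1 ≤ 2 * t := by
      have h5 : (1 - t)⁻¹ - 1 = t / (1 - t) := by field_simp; ring
      rw [h5, div_le_iff₀ h1]
      nlinarith
    linarith
  · have hlog : 0 ≤ Real.log (1 - t) := Real.log_nonneg (by linarith)
    rw [abs_of_nonneg hlog, abs_of_neg ht]
    have := Real.log_le_sub_one_of_pos h1
    linarith

set_option maxHeartbeats 1000000 in
/-- Multipliability of the infinite q-Pochhammer product. -/
lemma qPoch_multipliable {q : ℝ} (hq0 : 0 < q) (hq1 : q < 1) (x : ℝ) :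
    Multipliable (fun j : ℕ => 1 - x * q ^ j) := by
  have hten : Tendsto (fun N : ℕ => |x| * q ^ N) atTop (𝓝 0) := by
    simpa using (tendsto_pow_atTop_nhds_zero_of_lt_one hq0.le hq1).const_mul |x|
  obtain ⟨N, hN⟩ := (hten.eventually_lt_const (by norm_num : (0:ℝ) < 1/2)).exists
  have hbound : ∀ j : ℕ, |x * q ^ (j + N)| ≤ 1 / 2 := by
    intro j
    have h1 : |x * q ^ (j + N)| = |x| * q ^ N * q ^ j := by
      rw [abs_mul, abs_of_nonneg (pow_nonneg hq0.le _), pow_add, mul_comm (q ^ j)]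
      ring
    rw [h1]
    have h2 : q ^ j ≤ 1 := pow_le_one₀ hq0.le hq1.le
    have h3 : 0 ≤ |x| * q ^ N := mul_nonneg (abs_nonneg x) (pow_nonneg hq0.le N)
    nlinarith
  have hpos : ∀ j : ℕ, 0 < 1 - x * q ^ (j + N) := by
    intro j
    have := abs_le.mp (hbound j)
    have := this.2
    linarith [this]
  have hlogsum : Summable (fun j : ℕ => Real.log (1 - x * q ^ (j + N))) := by
    apply Summable.of_norm_bounded (g := fun j => 2 * (|x| * q ^ N) * q ^ j)
    · exact ((summable_geometric_of_lt_one hq0.le hq1).mul_left _)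
    · intro j
      have h1 := abs_log_one_sub_le (hbound j)
      have h2 : |x * q ^ (j + N)| = |x| * q ^ N * q ^ j := by
        rw [abs_mul, abs_of_nonneg (pow_nonneg hq0.le _), pow_add, mul_comm (q ^ j)]
        ring
      rw [Real.norm_eq_abs]
      rw [h2] at h1
      linarith
  have hmult : Multipliable (fun j : ℕ => 1 - x * q ^ (j + N)) := by
    exact Real.multipliable_of_summable_log (fun j => hpos j) hlogsum
  exact hmult.hasProd.prod_range_mul.multipliable

lemma qPoch_tendsto {q : ℝ} (hq0 : 0 < q) (hq1 : q < 1) (x : ℝ) :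
    Tendsto (fun N : ℕ => qPoch q x N) atTop (𝓝 (qPochInf q x)) :=
  (qPoch_multipliable hq0 hq1 x).hasProd.tendsto_prod_nat

lemma qPochInf_pos {q x : ℝ} (hq0 : 0 < q) (hq1 : q < 1) (hx0 : 0 ≤ x) (hx1 : x < 1) :
    0 < qPochInf q x := by
  have h := ge_of_tendsto' (qPoch_tendsto hq0 hq1 x) (fun n => qPoch_ge hq0 hq1 hx0 hx1 n)
  exact lt_of_lt_of_le (Real.exp_pos _) h

/-- The summand of the series, as a function of the parameter `α`. -/
noncomputable def qT (q b α : ℝ) (n : ℕ) : ℝ :=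
  qPoch q (α * b * q) n * qPoch q (b * q) n /
      (qPoch q (α * q) n * qPoch q q n) *
    (1 - α * b * q ^ (2 * n + 1)) * α ^ n * q ^ (n ^ 2)

/-- The summand without the `(1 - abq^{2n+1})` factor. -/
noncomputable def qB (q b α : ℝ) (n : ℕ) : ℝ :=
  qPoch q (α * b * q) n * qPoch q (b * q) n /
      (qPoch q (α * q) n * qPoch q q n) * α ^ n * q ^ (n ^ 2)

lemma qT_eq_qB (q b α : ℝ) (n : ℕ) :
    qT q b α n = qB q b α n * (1 - α * b * q ^ (2 * n + 1)) := by
  simp only [qT, qB]; ring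

/-- The bounding constant. -/
noncomputable def qK (q a b : ℝ) : ℝ :=
  Real.exp ((a * |b| * q + |b| * q) / (1 - q) +
    (a * q / ((1 - a * q) * (1 - q)) + q / ((1 - q) * (1 - q))))

lemma qK_pos (q a b : ℝ) : 0 < qK q a b := Real.exp_pos _

lemma qK_one_add_nonneg {q a b : ℝ} (hq0 : 0 < q) (ha0 : 0 < a) : (0:ℝ) ≤ 1 + a * |b| * q := by
  have := mul_nonneg (mul_nonneg ha0.le (abs_nonneg b)) hq0.le
  linarith

lemma qB_bound {q a b α : ℝ} (hq0 : 0 < q) (hq1 : q < 1) (ha0 : 0 < a) (haq : a * q < 1)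
    (hα0 : 0 < α) (hαa : α ≤ a) (n : ℕ) :
    |qB q b α n| ≤ qK q a b * (α ^ n * q ^ (n ^ 2)) := by
  have hq' : (0:ℝ) < 1 - q := by linarith
  have hαq1 : α * q < 1 := lt_of_le_of_lt (by nlinarith : α * q ≤ a * q) haq
  have hαq0 : (0:ℝ) ≤ α * q := by positivity
  have hA : Real.exp (-(a * q / ((1 - a * q) * (1 - q)))) ≤ qPoch q (α * q) n :=
    le_trans (qPoch_ge hq0 hq1 (by positivity) haq n)
      (qPoch_anti hq0 hq1 hαq0 (by nlinarith) haq n)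
  have hQd : Real.exp (-(q / ((1 - q) * (1 - q)))) ≤ qPoch q q n :=
    qPoch_ge hq0 hq1 hq0.le hq1 n
  have hApos : 0 < qPoch q (α * q) n := qPoch_pos hq0 hq1 hαq0 hαq1 n
  have hQdpos : 0 < qPoch q q n := qPoch_pos hq0 hq1 hq0.le hq1 n
  have hP : |qPoch q (α * b * q) n| ≤ Real.exp (a * |b| * q / (1 - q)) := by
    refine le_trans (qPoch_abs_le (α * b * q) hq0 hq1 n) (Real.exp_le_exp.mpr ?_)
    have h1 : |α * b * q| = α * |b| * q := by
      rw [abs_mul, abs_mul, abs_of_pos hα0, abs_of_pos hq0]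
    rw [h1]
    gcongr
  have hR : |qPoch q (b * q) n| ≤ Real.exp (|b| * q / (1 - q)) := by
    refine le_trans (qPoch_abs_le (b * q) hq0 hq1 n) (Real.exp_le_exp.mpr ?_)
    rw [abs_mul, abs_of_pos hq0]
  have hrw : |qB q b α n| = |qPoch q (α * b * q) n| * |qPoch q (b * q) n| /
      (qPoch q (α * q) n * qPoch q q n) * (α ^ n * q ^ (n ^ 2)) := by
    simp only [qB]
    rw [abs_mul, abs_mul, abs_div, abs_mul, abs_mul,
      abs_of_pos hApos, abs_of_pos hQdpos,
      abs_of_pos (pow_pos hα0 n), abs_of_pos (pow_pos hq0 (n ^ 2))]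
    ring
  rw [hrw]
  have hstep : |qPoch q (α * b * q) n| * |qPoch q (b * q) n| /
      (qPoch q (α * q) n * qPoch q q n) ≤
      Real.exp (a * |b| * q / (1 - q)) * Real.exp (|b| * q / (1 - q)) /
        (Real.exp (-(a * q / ((1 - a * q) * (1 - q)))) *
          Real.exp (-(q / ((1 - q) * (1 - q))))) := by
    refine div_le_div₀ (by positivity) ?_ (by positivity) ?_
    · exact mul_le_mul hP hR (abs_nonneg _) (Real.exp_pos _).le
    · exact mul_le_mul hA hQd (Real.exp_pos _).le hApos.le
  have hval : Real.exp (a * |b| * q / (1 - q)) * Real.exp (|b| * q / (1 - q)) /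
      (Real.exp (-(a * q / ((1 - a * q) * (1 - q)))) *
        Real.exp (-(q / ((1 - q) * (1 - q))))) = qK q a b := by
    rw [← Real.exp_add, ← Real.exp_add, ← Real.exp_sub, qK]
    congr 1
    field_simp
    ring
  rw [hval] at hstep
  exact mul_le_mul_of_nonneg_right hstep (by positivity)

lemma qT_bound {q a b α : ℝ} (hq0 : 0 < q) (hq1 : q < 1) (ha0 : 0 < a) (haq : a * q < 1)
    (hα0 : 0 < α) (hαa : α ≤ a) (n : ℕ) :
    |qT q b α n| ≤ qK q a b * (1 + a * |b| * q) * (α ^ n * q ^ (n ^ 2)) := by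
  rw [qT_eq_qB, abs_mul]
  have hc : |1 - α * b * q ^ (2 * n + 1)| ≤ 1 + a * |b| * q := by
    have h1 : |1 - α * b * q ^ (2 * n + 1)| ≤ |(1:ℝ)| + |α * b * q ^ (2 * n + 1)| :=
      abs_sub _ _
    have h2 : |α * b * q ^ (2 * n + 1)| = α * |b| * q ^ (2 * n + 1) := by
      rw [abs_mul, abs_mul, abs_of_pos hα0, abs_of_pos (pow_pos hq0 _)]
    have h3 : q ^ (2 * n + 1) ≤ q := by
      calc q ^ (2 * n + 1) ≤ q ^ 1 := pow_le_pow_of_le_one hq0.le hq1.le (by omega)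
        _ = q := pow_one q
    have h4 : α * |b| * q ^ (2 * n + 1) ≤ a * |b| * q := by
      calc α * |b| * q ^ (2 * n + 1)
          ≤ a * |b| * q ^ (2 * n + 1) :=
            mul_le_mul_of_nonneg_right (mul_le_mul_of_nonneg_right hαa (abs_nonneg b))
              (pow_nonneg hq0.le _)
        _ ≤ a * |b| * q := mul_le_mul_of_nonneg_left h3
              (mul_nonneg ha0.le (abs_nonneg b))
    rw [abs_one] at h1
    rw [h2] at h1
    linarith
  calc |qB q b α n| * |1 - α * b * q ^ (2 * n + 1)|
      ≤ qK q a b * (α ^ n * q ^ (n ^ 2)) * (1 + a * |b| * q) := by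
        exact mul_le_mul (qB_bound hq0 hq1 ha0 haq hα0 hαa n) hc (abs_nonneg _)
          (mul_nonneg (qK_pos q a b).le (by positivity))
    _ = qK q a b * (1 + a * |b| * q) * (α ^ n * q ^ (n ^ 2)) := by ring

lemma pow_sq_le {q α : ℝ} (hq0 : 0 < q) (hq1 : q < 1) (hα0 : 0 < α) (n : ℕ) :
    α ^ n * q ^ (n ^ 2) ≤ (α * q) ^ n := by
  rw [mul_pow]
  have h1 : q ^ (n ^ 2) ≤ q ^ n := pow_le_pow_of_le_one hq0.le hq1.le (Nat.le_self_pow (by norm_num) n)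
  exact mul_le_mul_of_nonneg_left h1 (pow_nonneg hα0.le n)

lemma qT_summable_abs {q a b α : ℝ} (hq0 : 0 < q) (hq1 : q < 1) (ha0 : 0 < a) (haq : a * q < 1)
    (hα0 : 0 < α) (hαa : α ≤ a) :
    Summable (fun n : ℕ => |qT q b α n|) := by
  have hαq1 : α * q < 1 := lt_of_le_of_lt (by nlinarith : α * q ≤ a * q) haq
  apply Summable.of_nonneg_of_le (fun n => abs_nonneg _)
    (fun n => le_trans (qT_bound hq0 hq1 ha0 haq hα0 hαa n)
      (mul_le_mul_of_nonneg_left (pow_sq_le hq0 hq1 hα0 n)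
        (mul_nonneg (qK_pos q a b).le (qK_one_add_nonneg hq0 ha0))))
  exact ((summable_geometric_of_lt_one (by positivity) hαq1).mul_left _)

lemma qT_summable {q a b α : ℝ} (hq0 : 0 < q) (hq1 : q < 1) (ha0 : 0 < a) (haq : a * q < 1)
    (hα0 : 0 < α) (hαa : α ≤ a) :
    Summable (qT q b α) :=
  (qT_summable_abs hq0 hq1 ha0 haq hα0 hαa).of_abs

/-- The telescoping sequence. -/
noncomputable def qV (q b α : ℝ) (n : ℕ) : ℝ :=
  (1 - α * q) * (1 - q ^ n) * qB q b α n

lemma qV_zero (q b α : ℝ) : qV q b α 0 = 0 := by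
  simp [qV]

/-- The key WZ-style certificate identity. -/
lemma qT_certificate {q α : ℝ} (b : ℝ) (hq0 : 0 < q) (hq1 : q < 1)
    (hα0 : 0 < α) (hαq : α * q < 1) (n : ℕ) :
    (1 - α * q) * qT q b α n - (1 - α * b * q) * qT q b (α * q) n
      = qV q b α n - qV q b α (n + 1) := by
  have h1 : (0:ℝ) < 1 - α * q := by linarith
  have hApos : 0 < qPoch q (α * q) n := qPoch_pos hq0 hq1 (by positivity) hαq n
  have hQdpos : 0 < qPoch q q n := qPoch_pos hq0 hq1 hq0.le hq1 n
  have relY : (1 - α * b * q) * qPoch q (α * b * q * q) n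
      = qPoch q (α * b * q) n * (1 - α * b * q * q ^ n) := by
    rw [← qPoch_succ_left, qPoch_succ]
  have relZ : (1 - α * q) * qPoch q (α * q * q) n
      = qPoch q (α * q) n * (1 - α * q * q ^ n) := by
    rw [← qPoch_succ_left, qPoch_succ]
  have hZ : qPoch q (α * q * q) n
      = qPoch q (α * q) n * (1 - α * q * q ^ n) / (1 - α * q) := by
    rw [eq_div_iff h1.ne']
    linear_combination relZ
  have hT2 : (1 - α * b * q) * qT q b (α * q) n
      = qPoch q (α * b * q) n * (1 - α * b * q * q ^ n) *
          (qPoch q (b * q) n / (qPoch q (α * q * q) n * qPoch q q n) *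
            (1 - α * b * (q ^ n * q ^ n * q * q)) * (α ^ n * q ^ n) * q ^ (n ^ 2)) := by
    simp only [qT]
    rw [show α * q * b * q = α * b * q * q by ring]
    rw [show α * q * q = α * q * q from rfl]
    have e1 : (1 - α * q * b * q ^ (2 * n + 1)) = (1 - α * b * (q ^ n * q ^ n * q * q)) := by
      rw [show 2 * n + 1 = n + n + 1 by ring, pow_add, pow_add, pow_one]
      ring
    have e2 : (α * q) ^ n = α ^ n * q ^ n := mul_pow α q n
    rw [e1, e2]
    linear_combination (qPoch q (b * q) n / (qPoch q (α * q * q) n * qPoch q q n) *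
      (1 - α * b * (q ^ n * q ^ n * q * q)) * (α ^ n * q ^ n) * q ^ (n ^ 2)) * relY
  rw [hT2]
  simp only [qT, qV, qB]
  rw [hZ]
  have e1 : q ^ (2 * n + 1) = q ^ n * q ^ n * q := by
    rw [show 2 * n + 1 = n + n + 1 by ring, pow_add, pow_add, pow_one]
  have e2 : q ^ (n + 1) = q ^ n * q := pow_succ q n
  have e3 : α ^ (n + 1) = α ^ n * α := pow_succ α n
  have e4 : q ^ ((n + 1) ^ 2) = q ^ (n ^ 2) * (q ^ n * q ^ n * q) := by
    rw [show (n + 1) ^ 2 = n ^ 2 + (n + n + 1) by ring, pow_add, pow_add, pow_add, pow_one]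
  have e5 : qPoch q (α * b * q) (n + 1) = qPoch q (α * b * q) n * (1 - α * b * q * q ^ n) :=
    qPoch_succ q _ n
  have e6 : qPoch q (b * q) (n + 1) = qPoch q (b * q) n * (1 - b * q * q ^ n) :=
    qPoch_succ q _ n
  have e7 : qPoch q (α * q) (n + 1) = qPoch q (α * q) n * (1 - α * q * q ^ n) :=
    qPoch_succ q _ n
  have e8 : qPoch q q (n + 1) = qPoch q q n * (1 - q * q ^ n) :=
    qPoch_succ q _ n
  rw [e1, e2, e3, e4, e5, e6, e7, e8]
  have hq1n : (0:ℝ) < 1 - α * q * q ^ n := by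
    have hp1 : q ^ n ≤ 1 := pow_le_one₀ hq0.le hq1.le
    have hp2 : 0 < q ^ n := pow_pos hq0 n
    nlinarith
  have hqn : (0:ℝ) < 1 - q * q ^ n := by
    have hp1 : q ^ n ≤ 1 := pow_le_one₀ hq0.le hq1.le
    have hp2 : 0 < q ^ n := pow_pos hq0 n
    nlinarith
  field_simp
  ring

/-- The functional equation `(1-αq) S(α) = (1-αbq) S(αq)`. -/
lemma qS_funEq {q a b α : ℝ} (hq0 : 0 < q) (hq1 : q < 1) (ha0 : 0 < a) (haq : a * q < 1)
    (hα0 : 0 < α) (hαa : α ≤ a) :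
    (1 - α * q) * (∑' n, qT q b α n) = (1 - α * b * q) * (∑' n, qT q b (α * q) n) := by
  have hαq1 : α * q < 1 := lt_of_le_of_lt (by nlinarith : α * q ≤ a * q) haq
  have hαq0 : 0 < α * q := by positivity
  have hαqa : α * q ≤ a := by nlinarith
  have hs1 : Summable (qT q b α) := qT_summable hq0 hq1 ha0 haq hα0 hαa
  have hs2 : Summable (qT q b (α * q)) := qT_summable hq0 hq1 ha0 haq hαq0 hαqa
  have hw : HasSum (fun n => (1 - α * q) * qT q b α n - (1 - α * b * q) * qT q b (α * q) n)
      ((1 - α * q) * (∑' n, qT q b α n) - (1 - α * b * q) * (∑' n, qT q b (α * q) n)) :=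
    (hs1.hasSum.mul_left _).sub (hs2.hasSum.mul_left _)
  have hpartial : ∀ N : ℕ,
      ∑ n ∈ Finset.range N, ((1 - α * q) * qT q b α n - (1 - α * b * q) * qT q b (α * q) n)
        = -qV q b α N := by
    intro N
    have : ∀ n ∈ Finset.range N,
        (1 - α * q) * qT q b α n - (1 - α * b * q) * qT q b (α * q) n
          = qV q b α n - qV q b α (n + 1) :=
      fun n _ => qT_certificate b hq0 hq1 hα0 hαq1 n
    rw [Finset.sum_congr rfl this, Finset.sum_range_sub' (qV q b α) N, qV_zero]
    ring
  have hVtend : Tendsto (fun N => qV q b α N) atTop (𝓝 0) := by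
    apply squeeze_zero_norm (a := fun N => qK q a b * (α * q) ^ N)
    · intro N
      rw [Real.norm_eq_abs, qV, abs_mul, abs_mul]
      have h1 : |1 - α * q| ≤ 1 := by
        rw [abs_le]; constructor <;> nlinarith
      have h2 : |1 - q ^ N| ≤ 1 := by
        have hp1 : q ^ N ≤ 1 := pow_le_one₀ hq0.le hq1.le
        have hp2 : 0 < q ^ N := pow_pos hq0 N
        rw [abs_le]; constructor <;> nlinarith
      have h3 := (qB_bound hq0 hq1 ha0 haq hα0 hαa N).trans
        (mul_le_mul_of_nonneg_left (pow_sq_le hq0 hq1 hα0 N) (qK_pos q a b).le)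
      calc |1 - α * q| * |1 - q ^ N| * |qB q b α N|
          ≤ 1 * 1 * |qB q b α N| := by
            apply mul_le_mul (mul_le_mul h1 h2 (abs_nonneg _) zero_le_one)
              (le_refl _) (abs_nonneg _) (by norm_num)
        _ = |qB q b α N| := by ring
        _ ≤ qK q a b * (α * q) ^ N := h3
    · have := (tendsto_pow_atTop_nhds_zero_of_lt_one hαq0.le hαq1).const_mul (qK q a b)
      simpa using this
  have ht1 := hw.tendsto_sum_nat
  have ht2 : Tendsto (fun N => ∑ n ∈ Finset.range N,
      ((1 - α * q) * qT q b α n - (1 - α * b * q) * qT q b (α * q) n)) atTop (𝓝 0) := by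
    simp only [hpartial]
    simpa using hVtend.neg
  have := tendsto_nhds_unique ht1 ht2
  linarith [this]

/-- Iterating the functional equation. -/
lemma qS_iterate {q a b : ℝ} (hq0 : 0 < q) (hq1 : q < 1) (ha0 : 0 < a) (haq : a * q < 1)
    (k : ℕ) :
    qPoch q (a * q) k * (∑' n, qT q b a n)
      = qPoch q (a * b * q) k * (∑' n, qT q b (a * q ^ k) n) := by
  induction k with
  | zero => simp [qPoch]
  | succ k IH =>
      have hαk0 : 0 < a * q ^ k := by positivity
      have hαka : a * q ^ k ≤ a := by
        have h1 : q ^ k ≤ 1 := pow_le_one₀ hq0.le hq1.le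
        nlinarith
      have hfe := qS_funEq hq0 hq1 ha0 haq hαk0 hαka (b := b)
      have harg : a * q ^ k * q = a * q ^ (k + 1) := by rw [pow_succ]; ring
      rw [harg] at hfe
      rw [qPoch_succ, qPoch_succ]
      linear_combination (1 - a * q * q ^ k) * IH
        + qPoch q (a * b * q) k * hfe

/-- The constant for the `S(α) → 1` estimate. -/
noncomputable def qC (q a b : ℝ) : ℝ :=
  |b| * q + qK q a b * (1 + a * |b| * q) * q / (1 - a * q)

lemma qT_zero (q b α : ℝ) : qT q b α 0 = 1 - α * b * q := by
  simp [qT, qPoch]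

lemma qS_near_one {q a b α : ℝ} (hq0 : 0 < q) (hq1 : q < 1) (ha0 : 0 < a) (haq : a * q < 1)
    (hα0 : 0 < α) (hαa : α ≤ a) :
    |(∑' n, qT q b α n) - 1| ≤ qC q a b * α := by
  have hs1 : Summable (qT q b α) := qT_summable hq0 hq1 ha0 haq hα0 hαa
  have hsa : Summable (fun n : ℕ => |qT q b α n|) := qT_summable_abs hq0 hq1 ha0 haq hα0 hαa
  have hsa1 : Summable (fun n : ℕ => |qT q b α (n + 1)|) :=
    (summable_nat_add_iff 1).mpr hsa
  have hgeom : Summable (fun n : ℕ => qK q a b * (1 + a * |b| * q) * (α * q) * (a * q) ^ n) :=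
    (summable_geometric_of_lt_one (by positivity) haq).mul_left _
  have hbound : ∀ n : ℕ, |qT q b α (n + 1)|
      ≤ qK q a b * (1 + a * |b| * q) * (α * q) * (a * q) ^ n := by
    intro n
    have h1 := qT_bound (b := b) hq0 hq1 ha0 haq hα0 hαa (n + 1)
    have h2 : α ^ (n + 1) * q ^ ((n + 1) ^ 2) ≤ α * q * (a * q) ^ n := by
      have h3 : α ^ (n + 1) ≤ α * a ^ n := by
        rw [pow_succ']
        exact mul_le_mul_of_nonneg_left (pow_le_pow_left₀ hα0.le hαa n) hα0.le
      have h4 : q ^ ((n + 1) ^ 2) ≤ q * q ^ n := by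
        calc q ^ ((n + 1) ^ 2) ≤ q ^ (n + 1) :=
              pow_le_pow_of_le_one hq0.le hq1.le (Nat.le_self_pow (by norm_num) (n + 1))
          _ = q * q ^ n := by rw [pow_succ']
      calc α ^ (n + 1) * q ^ ((n + 1) ^ 2)
          ≤ (α * a ^ n) * (q * q ^ n) :=
            mul_le_mul h3 h4 (pow_nonneg hq0.le _) (by positivity)
        _ = α * q * (a * q) ^ n := by rw [mul_pow]; ring
    calc |qT q b α (n + 1)|
        ≤ qK q a b * (1 + a * |b| * q) * (α ^ (n + 1) * q ^ ((n + 1) ^ 2)) := h1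
      _ ≤ qK q a b * (1 + a * |b| * q) * (α * q * (a * q) ^ n) :=
          mul_le_mul_of_nonneg_left h2
            (mul_nonneg (qK_pos q a b).le (qK_one_add_nonneg hq0 ha0))
      _ = qK q a b * (1 + a * |b| * q) * (α * q) * (a * q) ^ n := by ring
  have htail : |∑' n : ℕ, qT q b α (n + 1)|
      ≤ qK q a b * (1 + a * |b| * q) * (α * q) * (1 - a * q)⁻¹ := by
    calc |∑' n : ℕ, qT q b α (n + 1)| ≤ ∑' n : ℕ, |qT q b α (n + 1)| := by
          simpa [Real.norm_eq_abs] using norm_tsum_le_tsum_norm (f := fun n => qT q b α (n + 1))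
            (by simpa [Real.norm_eq_abs] using hsa1)
      _ ≤ ∑' n : ℕ, qK q a b * (1 + a * |b| * q) * (α * q) * (a * q) ^ n :=
          Summable.tsum_le_tsum hbound hsa1 hgeom
      _ = qK q a b * (1 + a * |b| * q) * (α * q) * (1 - a * q)⁻¹ := by
          rw [tsum_mul_left, tsum_geometric_of_lt_one (by positivity) haq]
  rw [Summable.tsum_eq_zero_add hs1, qT_zero]
  have hrw : 1 - α * b * q + (∑' n : ℕ, qT q b α (n + 1)) - 1
      = -(α * b * q) + ∑' n : ℕ, qT q b α (n + 1) := by ring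
  rw [hrw]
  calc |(-(α * b * q)) + ∑' n : ℕ, qT q b α (n + 1)|
      ≤ |(-(α * b * q))| + |∑' n : ℕ, qT q b α (n + 1)| := abs_add_le _ _
    _ ≤ α * |b| * q + qK q a b * (1 + a * |b| * q) * (α * q) * (1 - a * q)⁻¹ := by
        have : |(-(α * b * q))| = α * |b| * q := by
          rw [abs_neg, abs_mul, abs_mul, abs_of_pos hα0, abs_of_pos hq0]
        rw [this]
        linarith [htail]
    _ = qC q a b * α := by
        rw [qC]
        field_simp

/-- `S(a q^k) → 1`. -/
lemma qS_tendsto_one {q a b : ℝ} (hq0 : 0 < q) (hq1 : q < 1) (ha0 : 0 < a) (haq : a * q < 1) :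
    Tendsto (fun k : ℕ => ∑' n, qT q b (a * q ^ k) n) atTop (𝓝 1) := by
  have h0 : Tendsto (fun k : ℕ => (∑' n, qT q b (a * q ^ k) n) - 1) atTop (𝓝 0) := by
    apply squeeze_zero_norm (a := fun k => qC q a b * a * q ^ k)
    · intro k
      have hαk0 : 0 < a * q ^ k := by positivity
      have hαka : a * q ^ k ≤ a := by
        have h1 : q ^ k ≤ 1 := pow_le_one₀ hq0.le hq1.le
        nlinarith
      have := qS_near_one hq0 hq1 ha0 haq hαk0 hαka (b := b)
      rw [Real.norm_eq_abs]
      calc |(∑' n, qT q b (a * q ^ k) n) - 1| ≤ qC q a b * (a * q ^ k) := this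
        _ = qC q a b * a * q ^ k := by ring
    · have := (tendsto_pow_atTop_nhds_zero_of_lt_one hq0.le hq1).const_mul (qC q a b * a)
      simpa using this
  have := h0.add_const 1
  simpa using this

theorem summation_formula_A1
    (q a b : ℝ) (hq0 : 0 < q) (hq1 : q < 1)
    (ha0 : 0 < a) (ha1 : a < q⁻¹) :
    Summable (fun n : ℕ =>
      |qPoch q (a * b * q) n * qPoch q (b * q) n /
          (qPoch q (a * q) n * qPoch q q n) *
        (1 - a * b * q ^ (2 * n + 1)) * a ^ n * q ^ (n ^ 2)|) ∧
    ∑' n : ℕ,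
        qPoch q (a * b * q) n * qPoch q (b * q) n /
            (qPoch q (a * q) n * qPoch q q n) *
          (1 - a * b * q ^ (2 * n + 1)) * a ^ n * q ^ (n ^ 2) =
      (1 - a * b * q) * qPochInf q (a * b * q ^ 2) / qPochInf q (a * q) := by
  have haq : a * q < 1 := by
    have := mul_lt_mul_of_pos_right ha1 hq0
    rwa [inv_mul_cancel₀ hq0.ne'] at this
  have hfunrw : (fun n : ℕ =>
      qPoch q (a * b * q) n * qPoch q (b * q) n /
          (qPoch q (a * q) n * qPoch q q n) *
        (1 - a * b * q ^ (2 * n + 1)) * a ^ n * q ^ (n ^ 2)) = qT q b a := by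
    funext n
    simp [qT]
  constructor
  · have h := qT_summable_abs (b := b) hq0 hq1 ha0 haq ha0 le_rfl
    simpa [qT] using h
  · have hgoal : (∑' n : ℕ,
        qPoch q (a * b * q) n * qPoch q (b * q) n /
            (qPoch q (a * q) n * qPoch q q n) *
          (1 - a * b * q ^ (2 * n + 1)) * a ^ n * q ^ (n ^ 2)) = ∑' n, qT q b a n := by
      rw [hfunrw]
    rw [hgoal]
    have hpinfpos : 0 < qPochInf q (a * q) := qPochInf_pos hq0 hq1 (by positivity) haq
    have hL1 : Tendsto (fun k : ℕ => qPoch q (a * q) k * (∑' n, qT q b a n)) atTop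
        (𝓝 (qPochInf q (a * q) * ∑' n, qT q b a n)) :=
      (qPoch_tendsto hq0 hq1 (a * q)).mul_const _
    have hL2 : Tendsto (fun k : ℕ => qPoch q (a * b * q) k * (∑' n, qT q b (a * q ^ k) n))
        atTop (𝓝 (qPochInf q (a * b * q) * 1)) :=
      (qPoch_tendsto hq0 hq1 (a * b * q)).mul (qS_tendsto_one hq0 hq1 ha0 haq)
    have hfun : (fun k : ℕ => qPoch q (a * q) k * (∑' n, qT q b a n))
        = (fun k : ℕ => qPoch q (a * b * q) k * (∑' n, qT q b (a * q ^ k) n)) :=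
      funext (qS_iterate hq0 hq1 ha0 haq)
    have hEq : qPochInf q (a * q) * (∑' n, qT q b a n) = qPochInf q (a * b * q) * 1 :=
      tendsto_nhds_unique (hfun ▸ hL1) hL2
    rw [mul_one] at hEq
    have hsplit : qPochInf q (a * b * q) = (1 - a * b * q) * qPochInf q (a * b * q ^ 2) := by
      have t1 : Tendsto (fun k : ℕ => qPoch q (a * b * q) (k + 1)) atTop
          (𝓝 (qPochInf q (a * b * q))) :=
        (qPoch_tendsto hq0 hq1 (a * b * q)).comp (tendsto_add_atTop_nat 1)
      have t2 : Tendsto (fun k : ℕ => qPoch q (a * b * q) (k + 1)) atTop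
          (𝓝 ((1 - a * b * q) * qPochInf q (a * b * q ^ 2))) := by
        have hrw : (fun k : ℕ => qPoch q (a * b * q) (k + 1))
            = fun k => (1 - a * b * q) * qPoch q (a * b * q * q) k :=
          funext (qPoch_succ_left q _)
        rw [hrw, show a * b * q * q = a * b * q ^ 2 by ring]
        exact (qPoch_tendsto hq0 hq1 _).const_mul _
      exact tendsto_nhds_unique t1 t2
    rw [eq_div_iff hpinfpos.ne', ← hsplit]
    linear_combination hEq
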